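/- arXiv:1206.1366 — 3 statements merged into one kernel-verified Lean document; each statement's English description precedes it below -/
import Mathlib

section
/- Let 𝔄 be a semisimple Banach algebra over ℂ, i.e., a Banach algebra whose Jacobson radical is zero. Then any two complete submultiplicative norms on the underlying algebra of 𝔄 are equivalent; equivalently, any norm turning the algebra 𝔄 into a Banach algebra is equivalent to the given norm. -/
/-- A (not a priori complete) submultiplicative algebra norm on a complex algebra `A`. -/
structure AlgebraNormOn (A : Type*) [Ring A] [Algebra ℂ A] where
  toFun : A → ℝ
  nonneg' : ∀ a, 0 ≤ toFun a
  eq_zero_iff' : ∀ a, toFun a = 0 ↔ a = 0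
  add_le' : ∀ a b, toFun (a + b) ≤ toFun a + toFun b
  smul_eq' : ∀ (c : ℂ) (a : A), toFun (c • a) = ‖c‖ * toFun a
  mul_le' : ∀ a b, toFun (a * b) ≤ toFun a * toFun b

/-- Completeness of an algebra norm: every Cauchy sequence for the norm converges
with respect to the norm. -/
def AlgebraNormOn.IsComplete {A : Type*} [Ring A] [Algebra ℂ A]
    (n : AlgebraNormOn A) : Prop :=
  ∀ u : ℕ → A, (∀ ε : ℝ, 0 < ε → ∃ N, ∀ m ≥ N, ∀ k ≥ N, n.toFun (u m - u k) < ε) →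
    ∃ a : A, Filter.Tendsto (fun m => n.toFun (u m - a)) Filter.atTop (nhds 0)

open Filter Metric Topology Set
open scoped ENNReal NNReal

namespace JohnsonAux

variable {B : Type*} [NormedRing B] [NormedAlgebra ℂ B] [CompleteSpace B]

/-- The Gelfand sequence `‖y^(2^k)‖^(1/2^k)`. -/
noncomputable def gseq (y : B) (k : ℕ) : ℝ :=
  ‖y ^ 2 ^ k‖ ^ (((2 ^ k : ℕ) : ℝ))⁻¹

lemma gseq_nonneg (y : B) (k : ℕ) : 0 ≤ gseq y k :=
  Real.rpow_nonneg (norm_nonneg _) _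

lemma gseq_antitone (y : B) : Antitone (gseq y) := by
  apply antitone_nat_of_succ_le
  intro k
  have h1 : y ^ 2 ^ (k + 1) = (y ^ 2 ^ k) ^ 2 := by
    rw [← pow_mul, pow_succ]
  have h2 : ‖y ^ 2 ^ (k + 1)‖ ≤ ‖y ^ 2 ^ k‖ ^ 2 := by
    rw [h1, sq, sq]
    exact norm_mul_le _ _
  have h3 : gseq y (k + 1) ≤ (‖y ^ 2 ^ k‖ ^ 2) ^ (((2 ^ (k + 1) : ℕ) : ℝ))⁻¹ :=
    Real.rpow_le_rpow (norm_nonneg _) h2 (by positivity)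
  refine h3.trans (le_of_eq ?_)
  rw [← Real.rpow_natCast ‖y ^ 2 ^ k‖ 2, ← Real.rpow_mul (norm_nonneg _)]
  unfold gseq
  congr 1
  push_cast
  rw [pow_succ]
  field_simp

lemma gseq_tendsto (y : B) :
    Tendsto (fun k => ENNReal.ofReal (gseq y k)) atTop (𝓝 (spectralRadius ℂ y)) := by
  have h := spectrum.pow_norm_pow_one_div_tendsto_nhds_spectralRadius y
  have h2 : Tendsto (fun k : ℕ => 2 ^ k) atTop atTop :=
    tendsto_atTop_mono (fun k => (Nat.lt_two_pow_self (n := k)).le) tendsto_id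
  have := h.comp h2
  convert this using 2 with k
  simp only [Function.comp, gseq, one_div]

lemma spectralRadius_le_gseq (y : B) (k : ℕ) :
    spectralRadius ℂ y ≤ ENNReal.ofReal (gseq y k) :=
  le_of_tendsto (gseq_tendsto y)
    (eventually_atTop.2 ⟨k, fun _ hj => ENNReal.ofReal_le_ofReal (gseq_antitone y hj)⟩)

lemma spectralRadius_eq_zero_of_nilpotent (y : B) (k : ℕ) (h : y ^ 2 ^ k = 0) :
    spectralRadius ℂ y = 0 := by
  have h0 : ∀ j, k ≤ j → gseq y j = 0 := by
    intro j hj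
    have : y ^ 2 ^ j = 0 := by
      have : 2 ^ j = 2 ^ k * 2 ^ (j - k) := by
        rw [← pow_add]
        congr 1
        omega
      rw [this, pow_mul, h, zero_pow]
      positivity
    unfold gseq
    rw [this, norm_zero, Real.zero_rpow (by positivity)]
  have hev : ∀ᶠ j in atTop, ENNReal.ofReal (gseq y j) = 0 :=
    eventually_atTop.2 ⟨k, fun j hj => by rw [h0 j hj, ENNReal.ofReal_zero]⟩
  exact tendsto_nhds_unique ((gseq_tendsto y).congr' (hev.mono fun _ h => h)) tendsto_const_nhds

/-- Dini-type argument: a uniform Gelfand-sequence bound on a sphere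
from spectral radius bounds. -/
lemma exists_uniform_gseq (F : ℂ → B) (hF : Continuous F) {r c : ℝ} (hr : 0 < r) (hc : 0 < c)
    (hsp : ∀ z : ℂ, ‖z‖ = r → spectralRadius ℂ (F z) < ENNReal.ofReal c) :
    ∃ k : ℕ, 1 ≤ k ∧ ∀ z : ℂ, ‖z‖ = r → gseq (F z) k ≤ c := by
  set V : ℕ → Set ℂ := fun k => {z | gseq (F z) k < c} with hV
  have hVopen : ∀ k, IsOpen (V k) := by
    intro k
    have hcont : Continuous fun z => gseq (F z) k := by
      apply Continuous.rpow_const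
      · exact (hF.pow _).norm
      · intro z
        right
        positivity
    exact isOpen_lt hcont continuous_const
  have hcov : sphere (0 : ℂ) r ⊆ ⋃ k, V k := by
    intro z hz
    have hz' : ‖z‖ = r := by simpa [mem_sphere_iff_norm] using hz
    have := (gseq_tendsto (F z)).eventually_lt_const (hsp z hz')
    obtain ⟨k, hk⟩ := this.exists
    refine mem_iUnion.2 ⟨k, ?_⟩
    have := (ENNReal.ofReal_lt_ofReal_iff_of_nonneg (gseq_nonneg (F z) k)).1 hk
    exact this
  obtain ⟨I, hI⟩ := (isCompact_sphere (0 : ℂ) r).elim_finite_subcover V hVopen hcov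
  refine ⟨I.sup id + 1, by omega, ?_⟩
  intro z hz
  have hz' : z ∈ sphere (0 : ℂ) r := by simpa [mem_sphere_iff_norm] using hz
  obtain ⟨j, hjI, hjz⟩ := mem_iUnion₂.1 (hI hz')
  have hjk : j ≤ I.sup id + 1 := le_trans (Finset.le_sup (f := id) hjI) (by omega)
  exact le_of_lt (lt_of_le_of_lt (gseq_antitone (F z) hjk) hjz)

/-- The key three-circles estimate. -/
theorem key_est (t : B) (M : ℝ) (hM : 0 ≤ M) {δ : ℝ} (hδ0 : 0 < δ) (hδ1 : δ < 1)
    (x : B) (hx : ‖t - x‖ ≤ δ)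
    (hsp : ∀ z : ℂ, spectralRadius ℂ (x + z • (t - x)) ≤ ENNReal.ofReal (δ + ‖z‖ * M)) :
    spectralRadius ℂ t ≤
      ENNReal.ofReal (Real.sqrt (Real.sqrt δ) * max (2 + M) (‖t‖ + 2)) := by
  have hδs : 0 < Real.sqrt δ := Real.sqrt_pos.2 hδ0
  set r₁ : ℝ := Real.sqrt δ with hr₁
  set r₂ : ℝ := (Real.sqrt δ)⁻¹ with hr₂
  have hr₁0 : 0 < r₁ := hδs
  have hr₁1 : r₁ < 1 := by
    rw [hr₁]
    calc Real.sqrt δ < Real.sqrt 1 := Real.sqrt_lt_sqrt hδ0.le hδ1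
      _ = 1 := Real.sqrt_one
  have hr₂1 : 1 < r₂ := by
    rw [hr₂]
    rw [lt_inv_comm₀ one_pos hδs]
    simpa using hr₁1
  have hr₂0 : 0 < r₂ := lt_trans one_pos hr₂1
  set F : ℂ → B := fun z => x + z • (t - x) with hF
  have hFcont : Continuous F := continuous_const.add (continuous_id.smul continuous_const)
  have hF1 : F 1 = t := by simp [hF]
  set τ : ℝ := δ + r₁ * M with hτ
  have hτ0 : 0 ≤ τ := by positivity
  have hsp1 : ∀ z : ℂ, ‖z‖ = r₁ → spectralRadius ℂ (F z) < ENNReal.ofReal (τ + δ) := by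
    intro z hz
    refine lt_of_le_of_lt ?_ ((ENNReal.ofReal_lt_ofReal_iff (by positivity)).2
      (by linarith : δ + r₁ * M < τ + δ))
    simpa [hF, hz] using hsp z
  obtain ⟨k, hk1, hDini⟩ := exists_uniform_gseq F hFcont hr₁0 (by positivity) hsp1
  set N : ℕ := 2 ^ k with hN
  set m : ℕ := 2 ^ (k - 1) with hm
  have hNm : N = 2 * m := by
    rw [hN, hm, ← pow_succ']
    congr 1
    omega
  have hN0 : 0 < N := by positivity
  -- nilpotent case
  by_cases hnil : t ^ N = 0
  · rw [spectralRadius_eq_zero_of_nilpotent t k hnil]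
    exact zero_le'
  -- norming dual functional
  obtain ⟨φ, hφ1, hφt⟩ := exists_dual_vector ℂ (t ^ N) (norm_ne_zero_iff.2 hnil)
  set V : ℂ → ℂ := fun z => (z ^ m)⁻¹ * φ ((F z) ^ N) with hV
  set U : Set ℂ := ball (0 : ℂ) r₂ \ closedBall (0 : ℂ) r₁ with hU
  have hUb : Bornology.IsBounded U := (isBounded_ball).subset diff_subset
  have hclU : ∀ z ∈ closure U, r₁ ≤ ‖z‖ := by
    intro z hz
    have h1 : closure U ⊆ closure ((closedBall (0 : ℂ) r₁)ᶜ) :=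
      closure_mono fun w hw => hw.2
    have h2 : closure ((closedBall (0 : ℂ) r₁)ᶜ) = (ball (0 : ℂ) r₁)ᶜ := by
      rw [closure_compl, interior_closedBall (0 : ℂ) hr₁0.ne']
    have := h1 hz
    rw [h2] at this
    simpa [mem_ball_zero_iff, not_lt] using this
  have hFd : Differentiable ℂ F := (differentiable_const x).add (differentiable_id.smul_const (t - x))
  have hgd : Differentiable ℂ (fun z => φ ((F z) ^ N)) := φ.differentiable.comp (hFd.pow N)
  have hVd : DiffContOnCl ℂ V U := by
    apply DifferentiableOn.diffContOnCl
    intro z hz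
    have hz0 : z ≠ 0 := by
      intro h
      have := hclU z hz
      rw [h] at this
      simp at this
      linarith
    exact (((differentiable_id.pow m).differentiableAt.inv (pow_ne_zero m hz0)).mul
      hgd.differentiableAt).differentiableWithinAt
  set Cb : ℝ := max ((r₁ ^ m)⁻¹ * (τ + δ) ^ N) ((r₂ ^ m)⁻¹ * (‖t‖ + 2) ^ N) with hCb
  have hφle : ∀ y : B, ‖φ y‖ ≤ ‖y‖ := by
    intro y
    have := φ.le_opNorm y
    rwa [hφ1, one_mul] at this
  have hfr : ∀ w ∈ frontier U, ‖V w‖ ≤ Cb := by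
    intro w hw
    have hsub : frontier U ⊆ sphere (0 : ℂ) r₂ ∪ sphere (0 : ℂ) r₁ := by
      rw [hU, Set.diff_eq]
      refine (frontier_inter_subset _ _).trans ?_
      apply Set.union_subset
      · intro p hp
        left
        have := hp.1
        rwa [frontier_ball (0 : ℂ) hr₂0.ne'] at this
      · intro p hp
        right
        have := hp.2
        rwa [frontier_compl, frontier_closedBall (0 : ℂ) hr₁0.ne'] at this
    have hVnorm : ∀ p : ℂ, p ≠ 0 → ‖V p‖ = (‖p‖ ^ m)⁻¹ * ‖φ ((F p) ^ N)‖ := by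
      intro p _
      rw [hV]
      simp [norm_mul, norm_inv, norm_pow]
    rcases hsub hw with hw2 | hw1
    · -- outer sphere
      have hwn : ‖w‖ = r₂ := by simpa [mem_sphere_iff_norm] using hw2
      have hw0 : w ≠ 0 := by
        intro h
        rw [h, norm_zero] at hwn
        linarith
      have hFw : ‖F w‖ ≤ ‖t‖ + 2 := by
        have h1 : ‖F w‖ ≤ ‖x‖ + ‖w‖ * ‖t - x‖ := by
          refine (norm_add_le _ _).trans ?_
          rw [norm_smul]
        have h2 : ‖x‖ ≤ ‖t‖ + δ := by
          have : ‖x‖ ≤ ‖t‖ + ‖t - x‖ := by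
            have := norm_sub_le t (t - x)
            simpa using this
          linarith
        have h3 : ‖w‖ * ‖t - x‖ ≤ r₂ * δ := by
          rw [hwn]
          exact mul_le_mul_of_nonneg_left hx hr₂0.le
        have h4 : r₂ * δ = Real.sqrt δ := by
          rw [hr₂, inv_mul_eq_div, Real.div_sqrt]
        have h5 : Real.sqrt δ ≤ 1 := Real.sqrt_le_one.mpr hδ1.le
        have h6 : δ ≤ 1 := hδ1.le
        calc ‖F w‖ ≤ ‖x‖ + ‖w‖ * ‖t - x‖ := h1
          _ ≤ (‖t‖ + δ) + r₂ * δ := by linarith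
          _ ≤ ‖t‖ + 2 := by rw [h4]; linarith
      have hFwN : ‖(F w) ^ N‖ ≤ (‖t‖ + 2) ^ N :=
        (norm_pow_le' _ hN0).trans (pow_le_pow_left₀ (norm_nonneg _) hFw N)
      rw [hVnorm w hw0, hwn]
      refine le_trans ?_ (le_max_right _ _)
      exact mul_le_mul_of_nonneg_left ((hφle _).trans hFwN) (by positivity)
    · -- inner sphere
      have hwn : ‖w‖ = r₁ := by simpa [mem_sphere_iff_norm] using hw1
      have hw0 : w ≠ 0 := by
        intro h
        rw [h, norm_zero] at hwn
        linarith
      have hgw : gseq (F w) k ≤ τ + δ := hDini w hwn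
      have hFwN : ‖(F w) ^ N‖ ≤ (τ + δ) ^ N := by
        have h1 : (gseq (F w) k) ^ N ≤ (τ + δ) ^ N :=
          pow_le_pow_left₀ (gseq_nonneg _ _) hgw N
        have h2 : (gseq (F w) k) ^ N = ‖(F w) ^ N‖ := by
          rw [gseq, hN]
          exact Real.rpow_inv_natCast_pow (norm_nonneg _) (by positivity)
        rwa [h2] at h1
      rw [hVnorm w hw0, hwn]
      refine le_trans ?_ (le_max_left _ _)
      exact mul_le_mul_of_nonneg_left ((hφle _).trans hFwN) (by positivity)
  have h1U : (1 : ℂ) ∈ U := by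
    rw [hU]
    constructor
    · rw [mem_ball_zero_iff, norm_one]
      exact hr₂1
    · rw [mem_closedBall_zero_iff, norm_one]
      exact not_le.2 hr₁1
  have hmax := Complex.norm_le_of_forall_mem_frontier_norm_le hUb hVd hfr (subset_closure h1U)
  have hV1 : ‖V 1‖ = ‖t ^ N‖ := by
    rw [hV]
    simp only [one_pow, inv_one, one_mul, hF1]
    rw [hφt]
    simp [Complex.norm_real, abs_of_nonneg (norm_nonneg _)]
  have htN : ‖t ^ N‖ ≤ Cb := by rwa [hV1] at hmax
  -- unwind the three-circles bound
  set s : ℝ := Real.sqrt r₁ with hs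
  set s₂ : ℝ := Real.sqrt r₂ with hs₂
  have hs0 : 0 < s := Real.sqrt_pos.2 hr₁0
  have hs1 : s ≤ 1 := Real.sqrt_le_one.mpr hr₁1.le
  have hssq : s ^ 2 = r₁ := Real.sq_sqrt hr₁0.le
  have hs₂sq : s₂ ^ 2 = r₂ := Real.sq_sqrt hr₂0.le
  have hsN : s ^ N = r₁ ^ m := by rw [hNm, pow_mul, hssq]
  have hs₂N : s₂ ^ N = r₂ ^ m := by rw [hNm, pow_mul, hs₂sq]
  have hs₂s : s₂ = s⁻¹ := by rw [hs₂, hs, hr₂, hr₁, Real.sqrt_inv]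
  set Q : ℝ := max ((τ + δ) / s) ((‖t‖ + 2) * s) with hQ
  have hQ0 : 0 ≤ Q := le_trans (by positivity) (le_max_right _ _)
  have hCbQ : Cb ≤ Q ^ N := by
    rw [hCb]
    apply max_le
    · have e1 : (r₁ ^ m)⁻¹ * (τ + δ) ^ N = ((τ + δ) / s) ^ N := by
        rw [div_pow, hsN, div_eq_inv_mul]
      rw [e1]
      exact pow_le_pow_left₀ (by positivity) (le_max_left _ _) N
    · have e0 : (r₂ ^ m)⁻¹ = s ^ N := by
        rw [← hs₂N, hs₂s, inv_pow, inv_inv]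
      have e1 : (r₂ ^ m)⁻¹ * (‖t‖ + 2) ^ N = ((‖t‖ + 2) * s) ^ N := by
        rw [e0, mul_pow]
        ring
      rw [e1]
      exact pow_le_pow_left₀ (by positivity) (le_max_right _ _) N
  have hgseqQ : gseq t k ≤ Q := by
    have h1 : ‖t ^ N‖ ≤ Q ^ N := htN.trans hCbQ
    have h2 : gseq t k ≤ (Q ^ N) ^ (((N : ℕ) : ℝ))⁻¹ := by
      rw [gseq, ← hN]
      exact Real.rpow_le_rpow (norm_nonneg _) h1 (by positivity)
    rwa [Real.pow_rpow_inv_natCast hQ0 hN0.ne'] at h2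
  have hQfinal : Q ≤ Real.sqrt (Real.sqrt δ) * max (2 + M) (‖t‖ + 2) := by
    have hsval : s = Real.sqrt (Real.sqrt δ) := by rw [hs, hr₁]
    have hr₁sq : r₁ ^ 2 = δ := Real.sq_sqrt hδ0.le
    apply max_le
    · rw [div_le_iff₀ hs0, hsval.symm]
      have hτδ : τ + δ = 2 * δ + r₁ * M := by rw [hτ]; ring
      rw [hτδ]
      have e2 : s * max (2 + M) (‖t‖ + 2) * s = s ^ 2 * max (2 + M) (‖t‖ + 2) := by ring
      rw [e2, hssq]
      have h3 : r₁ * max (2 + M) (‖t‖ + 2) ≥ r₁ * (2 + M) :=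
        mul_le_mul_of_nonneg_left (le_max_left _ _) hr₁0.le
      have h4 : 2 * δ + r₁ * M ≤ r₁ * (2 + M) := by
        have : δ = r₁ ^ 2 := hr₁sq.symm
        nlinarith [hr₁1, hr₁0]
      linarith
    · rw [hsval.symm, mul_comm]
      exact mul_le_mul_of_nonneg_left (le_max_right _ _) hs0.le
  calc spectralRadius ℂ t ≤ ENNReal.ofReal (gseq t k) := spectralRadius_le_gseq t k
    _ ≤ _ := ENNReal.ofReal_le_ofReal (hgseqQ.trans hQfinal)

/-- Core lemma: an element approximable in the above sense is quasi-nilpotent. -/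
theorem spectralRadius_eq_zero_of_approx (t : B) (M : ℝ) (hM : 0 ≤ M)
    (H : ∀ δ : ℝ, 0 < δ → δ < 1 → ∃ x : B, ‖t - x‖ ≤ δ ∧
      ∀ z : ℂ, spectralRadius ℂ (x + z • (t - x)) ≤ ENNReal.ofReal (δ + ‖z‖ * M)) :
    spectralRadius ℂ t = 0 := by
  set C₀ : ℝ := max (2 + M) (‖t‖ + 2) with hC₀
  have hC₀pos : 0 < C₀ := lt_of_lt_of_le (by linarith) (le_max_left _ _)
  have key : ∀ ε : ℝ, 0 < ε → spectralRadius ℂ t ≤ ENNReal.ofReal ε := by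
    intro ε hε
    set δ : ℝ := min (1 / 2) ((ε / C₀) ^ 4) with hδ
    have hδ0 : 0 < δ := lt_min (by norm_num) (by positivity)
    have hδ1 : δ < 1 := lt_of_le_of_lt (min_le_left _ _) (by norm_num)
    obtain ⟨x, hx, hspx⟩ := H δ hδ0 hδ1
    have h1 := key_est t M hM hδ0 hδ1 x hx hspx
    refine h1.trans (ENNReal.ofReal_le_ofReal ?_)
    have hsq : Real.sqrt (Real.sqrt δ) ≤ ε / C₀ := by
      have h4 : δ ≤ (ε / C₀) ^ 4 := min_le_right _ _
      have e1 : Real.sqrt (Real.sqrt ((ε / C₀) ^ 4)) = ε / C₀ := by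
        have : (ε / C₀) ^ 4 = ((ε / C₀) ^ 2) ^ 2 := by ring
        rw [this, Real.sqrt_sq (by positivity), Real.sqrt_sq (by positivity)]
      calc Real.sqrt (Real.sqrt δ) ≤ Real.sqrt (Real.sqrt ((ε / C₀) ^ 4)) := by
            exact Real.sqrt_le_sqrt (Real.sqrt_le_sqrt h4)
        _ = ε / C₀ := e1
    calc Real.sqrt (Real.sqrt δ) * C₀ ≤ (ε / C₀) * C₀ :=
          mul_le_mul_of_nonneg_right hsq hC₀pos.le
      _ = ε := div_mul_cancel₀ ε hC₀pos.ne'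
  refine le_antisymm ?_ zero_le'
  refine ENNReal.le_of_forall_pos_le_add fun ε hε _ => ?_
  rw [zero_add, ← ENNReal.ofReal_coe_nnreal]
  exact key ε hε

end JohnsonAux

section CopyAlg

variable (A : Type*) [Ring A] [Algebra ℂ A] (n : AlgebraNormOn A)

/-- Type synonym carrying the second norm. -/
def NormCopy (_ : AlgebraNormOn A) : Type _ := A

instance : Ring (NormCopy A n) := inferInstanceAs (Ring A)
instance : Algebra ℂ (NormCopy A n) := inferInstanceAs (Algebra ℂ A)

lemma AlgebraNormOn.zero : n.toFun 0 = 0 := (n.eq_zero_iff' 0).2 rfl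

lemma AlgebraNormOn.neg (a : A) : n.toFun (-a) = n.toFun a := by
  have : -a = (-1 : ℂ) • a := by rw [neg_one_smul]
  rw [this, n.smul_eq']
  simp

noncomputable instance : NormedAddCommGroup (NormCopy A n) :=
  AddGroupNorm.toNormedAddCommGroup
    { toFun := fun a => n.toFun a
      map_zero' := n.zero
      add_le' := n.add_le'
      neg' := n.neg
      eq_zero_of_map_eq_zero' := fun a ha => (n.eq_zero_iff' a).1 ha }

noncomputable instance : NormedRing (NormCopy A n) :=
  { (inferInstance : NormedAddCommGroup (NormCopy A n)),
    (inferInstance : Ring (NormCopy A n)) with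
    norm_mul_le := n.mul_le' }

instance : NormedAlgebra ℂ (NormCopy A n) :=
  { (inferInstance : Algebra ℂ (NormCopy A n)) with
    norm_smul_le := fun c a => le_of_eq (n.smul_eq' c a) }

@[simp] lemma norm_normCopy (a : NormCopy A n) : ‖a‖ = n.toFun a := rfl

/-- The identity algebra isomorphism onto the copy. -/
def toNormCopy : A ≃ₐ[ℂ] NormCopy A n :=
  { toFun := fun a => (a : A)
    invFun := fun a => a
    left_inv := fun _ => rfl
    right_inv := fun _ => rfl
    map_mul' := fun _ _ => rfl
    map_add' := fun _ _ => rfl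
    commutes' := fun _ => rfl }

lemma normCopy_complete (hn : n.IsComplete) : CompleteSpace (NormCopy A n) := by
  apply Metric.complete_of_cauchySeq_tendsto
  intro u hu
  rw [Metric.cauchySeq_iff] at hu
  obtain ⟨a, ha⟩ := hn (fun k => u k) (fun ε hε => by have h := hu ε hε; simp only [dist_eq_norm] at h; exact h)
  refine ⟨(show NormCopy A n from a), ?_⟩
  rw [tendsto_iff_dist_tendsto_zero]
  exact ha.congr fun m => (dist_eq_norm (E := NormCopy A n) _ _).symm

end CopyAlg

namespace JohnsonAux

/-- Sequential version: separating-space elements are quasi-nilpotent. -/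
theorem spectralRadius_eq_zero_of_seq {A B : Type*}
    [NormedRing A] [NormedAlgebra ℂ A] [CompleteSpace A]
    [NormedRing B] [NormedAlgebra ℂ B] [CompleteSpace B]
    (φ : A ≃ₐ[ℂ] B) (u : ℕ → A) (t : B)
    (hu : Tendsto (fun i => ‖u i‖) atTop (𝓝 0))
    (hφu : Tendsto (fun i => φ (u i)) atTop (𝓝 t)) :
    spectralRadius ℂ t = 0 := by
  set s : A := φ.symm t with hs
  set M : ℝ := (‖s‖ + 1) * (‖(1 : A)‖ + 1) with hM
  have hM0 : 0 ≤ M := by positivity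
  apply spectralRadius_eq_zero_of_approx t M hM0
  intro δ hδ0 hδ1
  -- pick a good index
  have h1 : ∀ᶠ i in atTop, ‖u i‖ * (‖(1 : A)‖ + 1) ≤ δ := by
    have : Tendsto (fun i => ‖u i‖ * (‖(1 : A)‖ + 1)) atTop (𝓝 0) := by
      simpa using hu.mul_const (‖(1 : A)‖ + 1)
    exact this.eventually_le_const (by linarith)
  have h2 : ∀ᶠ i in atTop, ‖t - φ (u i)‖ ≤ δ := by
    have : Tendsto (fun i => ‖t - φ (u i)‖) atTop (𝓝 0) := by
      have := (tendsto_iff_norm_sub_tendsto_zero.1 hφu)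
      simpa [norm_sub_rev] using this
    exact this.eventually_le_const (by linarith)
  obtain ⟨i, hi1, hi2⟩ := (h1.and h2).exists
  refine ⟨φ (u i), hi2, ?_⟩
  intro z
  have hui1 : ‖u i‖ ≤ δ := by
    nlinarith [norm_nonneg (u i), norm_nonneg (1 : A)]
  -- transfer the spectral radius computation to `A`
  have htrans : spectralRadius ℂ (φ (u i) + z • (t - φ (u i)))
      = spectralRadius ℂ (u i + z • (s - u i)) := by
    have : φ (u i + z • (s - u i)) = φ (u i) + z • (t - φ (u i)) := by
      rw [map_add, map_smul, map_sub, hs, AlgEquiv.apply_symm_apply]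
    rw [← this]
    unfold spectralRadius
    rw [AlgEquiv.spectrum_eq]
  rw [htrans]
  -- bound the spectral radius in `A`
  refine iSup₂_le fun ζ hζ => ?_
  rw [← ENNReal.ofReal_coe_nnreal, coe_nnnorm]
  apply ENNReal.ofReal_le_ofReal
  have hnorm : ‖u i + z • (s - u i)‖ ≤ ‖u i‖ + ‖z‖ * ‖s - u i‖ := by
    refine (norm_add_le _ _).trans ?_
    rw [norm_smul]
  have hbound := spectrum.norm_le_norm_mul_of_mem hζ
  have hδle1 : δ ≤ 1 := hδ1.le
  have hsu : ‖s - u i‖ ≤ ‖s‖ + 1 := by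
    refine (norm_sub_le _ _).trans ?_
    have : ‖u i‖ ≤ 1 := hui1.trans hδle1
    linarith
  calc ‖ζ‖ ≤ ‖u i + z • (s - u i)‖ * ‖(1 : A)‖ := hbound
    _ ≤ (‖u i‖ + ‖z‖ * ‖s - u i‖) * (‖(1 : A)‖ + 1) := by
        apply mul_le_mul hnorm (by linarith) (norm_nonneg _)
        positivity
    _ ≤ δ + ‖z‖ * M := by
        have e1 : (‖u i‖ + ‖z‖ * ‖s - u i‖) * (‖(1 : A)‖ + 1)
            = ‖u i‖ * (‖(1 : A)‖ + 1) + ‖z‖ * (‖s - u i‖ * (‖(1 : A)‖ + 1)) := by ring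
        rw [e1, hM]
        have : ‖s - u i‖ * (‖(1 : A)‖ + 1) ≤ (‖s‖ + 1) * (‖(1 : A)‖ + 1) := by
          apply mul_le_mul_of_nonneg_right hsu (by positivity)
        nlinarith [norm_nonneg z]

/-- Continuity (with bound) of an algebra isomorphism from a semisimple Banach algebra
onto a Banach algebra. -/
theorem exists_bound {A B : Type*}
    [NormedRing A] [NormedAlgebra ℂ A] [CompleteSpace A]
    [NormedRing B] [NormedAlgebra ℂ B] [CompleteSpace B]
    (φ : A ≃ₐ[ℂ] B)
    (hss : ∀ a : A, (∀ b : A, IsUnit (1 - b * a)) → a = 0) :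
    ∃ C : ℝ, 0 < C ∧ ∀ a : A, ‖φ a‖ ≤ C * ‖a‖ := by
  have hcont : Continuous (φ.toLinearMap : A →ₗ[ℂ] B) := by
    apply LinearMap.continuous_of_seq_closed_graph
    intro u x y hux huy
    -- the separating element
    set t : B := y - φ x with ht
    have hv : Tendsto (fun i => ‖u i - x‖) atTop (𝓝 0) :=
      tendsto_iff_norm_sub_tendsto_zero.1 hux
    have hφv : Tendsto (fun i => φ (u i - x)) atTop (𝓝 t) := by
      have : Tendsto (fun i => φ (u i) - φ x) atTop (𝓝 (y - φ x)) := by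
        exact Tendsto.sub_const (by exact huy) (φ x)
      simpa [map_sub] using this
    -- t is in the radical
    have hrad : ∀ b : A, IsUnit (1 - b * φ.symm t) := by
      intro b
      have hρ : spectralRadius ℂ ((φ b) * t) = 0 := by
        apply spectralRadius_eq_zero_of_seq φ (fun i => b * (u i - x)) ((φ b) * t)
        · have hb : Tendsto (fun i => ‖b‖ * ‖u i - x‖) atTop (𝓝 0) := by
            simpa using hv.const_mul ‖b‖
          refine squeeze_zero (fun i => norm_nonneg _) (fun i => norm_mul_le _ _) hb
        · have : Tendsto (fun i => (φ b) * φ (u i - x)) atTop (𝓝 ((φ b) * t)) :=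
            hφv.const_mul (φ b)
          simpa [map_mul] using this
      have hnotmem : (1 : ℂ) ∉ spectrum ℂ ((φ b) * t) := by
        intro hmem
        have h1 : (‖(1 : ℂ)‖₊ : ℝ≥0∞) ≤ spectralRadius ℂ ((φ b) * t) :=
          le_iSup₂ (f := fun k _ => ((‖k‖₊ : ℝ≥0∞))) (1 : ℂ) hmem
        rw [hρ] at h1
        simp at h1
      have hunit : IsUnit ((1 : B) - (φ b) * t) := by
        have := spectrum.notMem_iff.1 hnotmem
        rwa [map_one] at this
      have : φ.symm ((1 : B) - (φ b) * t) = 1 - b * φ.symm t := by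
        rw [map_sub, map_one, map_mul, AlgEquiv.symm_apply_apply]
      rw [← this]
      exact hunit.map φ.symm
    have hst : φ.symm t = 0 := hss _ hrad
    have : t = 0 := by
      have := congrArg φ hst
      rwa [AlgEquiv.apply_symm_apply, map_zero] at this
    rw [ht, sub_eq_zero] at this
    exact this
  set L : A →L[ℂ] B := ⟨φ.toLinearMap, hcont⟩ with hL
  refine ⟨‖L‖ + 1, by positivity, fun a => ?_⟩
  have h1 : ‖φ a‖ = ‖L a‖ := rfl
  rw [h1]
  calc ‖L a‖ ≤ ‖L‖ * ‖a‖ := L.le_opNorm a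
    _ ≤ (‖L‖ + 1) * ‖a‖ := by
        apply mul_le_mul_of_nonneg_right (by linarith) (norm_nonneg _)

end JohnsonAux

/-- **Johnson's uniqueness-of-norm theorem.** Let `A` be a semisimple Banach algebra over
`ℂ` (its Jacobson radical is zero, expressed here by the quasi-regularity criterion:
any `a` with `1 - b * a` invertible for all `b` is zero).  Then every complete
submultiplicative algebra norm on `A` is equivalent to the given norm; i.e. any norm
turning the algebra `A` into a Banach algebra is equivalent to the given one. -/
theorem johnson_uniqueness_of_norm (A : Type*) [NormedRing A] [NormedAlgebra ℂ A]
    [CompleteSpace A]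
    (hsemisimple : ∀ a : A, (∀ b : A, IsUnit (1 - b * a)) → a = 0)
    (n : AlgebraNormOn A) (hn : n.IsComplete) :
    ∃ C D : ℝ, 0 < C ∧ 0 < D ∧
      ∀ a : A, n.toFun a ≤ C * ‖a‖ ∧ ‖a‖ ≤ D * n.toFun a := by
  haveI : CompleteSpace (NormCopy A n) := normCopy_complete A n hn
  set φ : A ≃ₐ[ℂ] NormCopy A n := toNormCopy A n with hφ
  -- direction 1 : n ≤ C ‖·‖
  obtain ⟨C, hCpos, hC⟩ := JohnsonAux.exists_bound φ hsemisimple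
  -- direction 2 : ‖·‖ ≤ D n
  have hssCopy : ∀ a : NormCopy A n, (∀ b : NormCopy A n, IsUnit (1 - b * a)) → a = 0 := by
    intro a ha
    have : φ.symm a = 0 := by
      apply hsemisimple
      intro b
      have h1 : IsUnit ((1 : NormCopy A n) - (φ b) * a) := ha (φ b)
      have h2 : φ.symm ((1 : NormCopy A n) - (φ b) * a) = 1 - b * φ.symm a := by
        rw [map_sub, map_one, map_mul, AlgEquiv.symm_apply_apply]
      rw [← h2]
      exact h1.map φ.symm
    have := congrArg φ this
    rwa [AlgEquiv.apply_symm_apply, map_zero] at this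
  obtain ⟨D, hDpos, hD⟩ := JohnsonAux.exists_bound φ.symm hssCopy
  refine ⟨C, D, hCpos, hDpos, fun a => ⟨?_, ?_⟩⟩
  · have := hC a
    exact this
  · have := hD (φ a)
    exact this
end

section
/- Let K be a compact Hausdorff space and let 𝒞(K) be the algebra of continuous complex-valued functions on K. Then any complete submultiplicative norm ‖·‖ on 𝒞(K) (i.e., any norm turning 𝒞(K) into a Banach algebra) is equivalent to the supremum norm ‖·‖_∞. -/
/-- Type synonym carrying the algebra norm `n`. -/
def AlgebraNormOn.Syn {A : Type*} [Ring A] [Algebra ℂ A] (_n : AlgebraNormOn A) := A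

namespace AlgebraNormOn

variable {A : Type*} [Ring A] [Algebra ℂ A] (n : AlgebraNormOn A)

instance : Ring n.Syn := inferInstanceAs (Ring A)
instance : Algebra ℂ n.Syn := inferInstanceAs (Algebra ℂ A)

lemma map_zero : n.toFun 0 = 0 := (n.eq_zero_iff' 0).mpr rfl

lemma map_neg (a : A) : n.toFun (-a) = n.toFun a := by
  have := n.smul_eq' (-1 : ℂ) a
  simpa using this

noncomputable instance : NormedAddCommGroup n.Syn :=
  AddGroupNorm.toNormedAddCommGroup
    { toFun := n.toFun
      map_zero' := n.map_zero
      neg' := n.map_neg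
      add_le' := n.add_le'
      eq_zero_of_map_eq_zero' := fun a h => (n.eq_zero_iff' a).mp h }

lemma norm_def (a : n.Syn) : ‖a‖ = n.toFun a := rfl

noncomputable instance : NormedRing n.Syn :=
  { (inferInstance : NormedAddCommGroup n.Syn), (inferInstance : Ring n.Syn) with
    dist_eq := fun _ _ => rfl
    norm_mul_le := n.mul_le' }

noncomputable instance : NormedAlgebra ℂ n.Syn :=
  { (inferInstance : Algebra ℂ n.Syn) with
    norm_smul_le := fun c a => le_of_eq (n.smul_eq' c a) }

lemma completeSpace (hn : n.IsComplete) : CompleteSpace n.Syn := by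
  apply Metric.complete_of_cauchySeq_tendsto
  intro u hu
  rw [Metric.cauchySeq_iff] at hu
  obtain ⟨a, ha⟩ := hn u (fun ε hε => by
    obtain ⟨N, hN⟩ := hu ε hε
    exact ⟨N, fun m hm k hk => by have := hN m hm k hk; rwa [dist_eq_norm] at this⟩)
  refine ⟨a, ?_⟩
  exact tendsto_iff_norm_sub_tendsto_zero.mpr ha

end AlgebraNormOn

/-- For a compact Hausdorff space `K`, any complete submultiplicative norm on `𝒞(K)`
(i.e. any norm making `𝒞(K)` a Banach algebra) is equivalent to the supremum norm
(which is the canonical norm `‖·‖` on `C(K, ℂ)`). -/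
theorem continuousMap_complete_norm_equiv_sup (K : Type*) [TopologicalSpace K]
    [CompactSpace K] [T2Space K]
    (n : AlgebraNormOn C(K, ℂ)) (hn : n.IsComplete) :
    ∃ C D : ℝ, 0 < C ∧ 0 < D ∧
      ∀ f : C(K, ℂ), n.toFun f ≤ C * ‖f‖ ∧ ‖f‖ ≤ D * n.toFun f := by
  haveI : CompleteSpace n.Syn := n.completeSpace hn
  by_cases hK : Subsingleton C(K, ℂ)
  · refine ⟨1, 1, one_pos, one_pos, fun f => ?_⟩
    have hf : f = 0 := Subsingleton.elim f 0
    simp [hf, n.map_zero]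
  -- the easy direction: sup norm ≤ (n 1) * n
  have key : ∀ f : C(K, ℂ), ‖f‖ ≤ n.toFun f * n.toFun 1 := by
    intro f
    have h0 : (0:ℝ) ≤ n.toFun f * n.toFun 1 :=
      mul_nonneg (n.nonneg' f) (n.nonneg' 1)
    rw [ContinuousMap.norm_le f h0]
    intro x
    have hmem : f x ∈ spectrum ℂ (show n.Syn from f) := by
      have h : f x ∈ spectrum ℂ f := by
        rw [ContinuousMap.spectrum_eq_range f]
        exact Set.mem_range_self x
      exact h
    exact spectrum.norm_le_norm_mul_of_mem hmem
  -- bounded identity map from `n.Syn` to `C(K, ℂ)`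
  let ι : n.Syn →ₗ[ℂ] C(K, ℂ) :=
    { toFun := fun f => f
      map_add' := fun _ _ => rfl
      map_smul' := fun _ _ => rfl }
  have hι : ∀ f : n.Syn, ‖ι f‖ ≤ n.toFun 1 * ‖f‖ := fun f =>
    le_of_le_of_eq (key f) (mul_comm _ _)
  let ιL : n.Syn →L[ℂ] C(K, ℂ) := LinearMap.mkContinuous ι (n.toFun 1) hι
  have hinj : LinearMap.ker (ιL : n.Syn →ₗ[ℂ] C(K, ℂ)) = ⊥ :=
    LinearMap.ker_eq_bot.mpr (fun a b h => h)
  have hsurj : LinearMap.range (ιL : n.Syn →ₗ[ℂ] C(K, ℂ)) = ⊤ :=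
    LinearMap.range_eq_top.mpr (fun f => ⟨f, rfl⟩)
  let e := ContinuousLinearEquiv.ofBijective ιL hinj hsurj
  have hD1 : (0:ℝ) < n.toFun 1 := by
    rcases lt_or_eq_of_le (n.nonneg' 1) with h | h
    · exact h
    · exfalso
      have h1 : (1 : C(K,ℂ)) = 0 := (n.eq_zero_iff' 1).mp h.symm
      exact hK (subsingleton_of_zero_eq_one h1.symm)
  refine ⟨max 1 ‖(e.symm : C(K, ℂ) →L[ℂ] n.Syn)‖, n.toFun 1,
    lt_of_lt_of_le one_pos (le_max_left _ _), hD1, fun f => ?_⟩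
  constructor
  · set g : n.Syn := f with hg
    have hsy : e.symm f = g := by
      have h2 : ιL g = f := rfl
      have := ContinuousLinearEquiv.ofBijective_symm_apply_apply ιL hinj hsurj g
      rwa [h2] at this
    have hle := (e.symm : C(K, ℂ) →L[ℂ] n.Syn).le_opNorm f
    rw [show ((e.symm : C(K, ℂ) →L[ℂ] n.Syn) f : n.Syn) = g from hsy] at hle
    have hgn : ‖g‖ = n.toFun f := rfl
    rw [hgn] at hle
    calc n.toFun f ≤ ‖(e.symm : C(K, ℂ) →L[ℂ] n.Syn)‖ * ‖f‖ := hle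
      _ ≤ max 1 ‖(e.symm : C(K, ℂ) →L[ℂ] n.Syn)‖ * ‖f‖ :=
          mul_le_mul_of_nonneg_right (le_max_right _ _) (norm_nonneg f)
  · calc ‖f‖ ≤ n.toFun f * n.toFun 1 := key f
      _ = n.toFun 1 * n.toFun f := mul_comm _ _
end

section
/- The free group F₂ on two generators (as a discrete group) is not amenable: there is no left invariant mean on ℓ^∞(F₂). -/
/-- A left invariant mean on `ℓ^∞(G)` for a discrete group `G`: a continuous linear
functional `M` with `‖M‖ = 1 = M(1)` such that `M(L_x φ) = M(φ)` for all `x ∈ G` and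
`φ ∈ ℓ^∞(G)`, where `(L_x φ)(y) = φ(x⁻¹ y)`. -/
def IsDiscreteLeftInvariantMean (G : Type*) [Group G]
    (M : lp (fun _ : G => ℂ) ⊤ →L[ℂ] ℂ) : Prop :=
  ‖M‖ = 1 ∧ M 1 = 1 ∧
  ∀ (x : G) (φ ψ : lp (fun _ : G => ℂ) ⊤),
    (∀ y : G, ψ y = φ (x⁻¹ * y)) → M ψ = M φ

open scoped Classical

noncomputable section NonAmenableSection

namespace NonAmenableAux

set_option linter.unusedSectionVars false

variable {G : Type*} [Group G]

/-- indicator function as an `ℓ^∞` element -/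
def ind (A : Set G) : lp (fun _ : G => ℂ) ⊤ :=
  ⟨fun y => if y ∈ A then (1:ℂ) else 0, memℓp_infty ⟨1, by
    rintro r ⟨y, rfl⟩
    by_cases h : y ∈ A <;> simp [h]⟩⟩

lemma ind_apply (A : Set G) (y : G) :
    (ind A : ∀ _ : G, ℂ) y = if y ∈ A then 1 else 0 := rfl

lemma ind_union {A B : Set G} (h : Disjoint A B) :
    ind (A ∪ B) = ind A + ind B := by
  apply Subtype.ext
  funext y
  rw [lp.coeFn_add]
  simp only [Pi.add_apply, ind_apply]
  by_cases hA : y ∈ A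
  · have hB : y ∉ B := fun hB => Set.disjoint_left.mp h hA hB
    simp [hA, hB]
  · by_cases hB : y ∈ B <;> simp [hA, hB]

lemma ind_univ : ind (Set.univ : Set G) = 1 := by
  apply Subtype.ext
  funext y
  rw [lp.infty_coeFn_one]
  simp [ind_apply]

variable (M : lp (fun _ : G => ℂ) ⊤ →L[ℂ] ℂ)

/-- the induced finitely additive measure -/
def mu (A : Set G) : ℝ := (M (ind A)).re

lemma mu_union {A B : Set G} (h : Disjoint A B) :
    mu M (A ∪ B) = mu M A + mu M B := by
  unfold mu
  rw [ind_union h, map_add, Complex.add_re]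

lemma mu_univ (h1 : M 1 = 1) : mu M (Set.univ : Set G) = 1 := by
  unfold mu
  rw [ind_univ, h1, Complex.one_re]

lemma mu_nonneg (hM : ‖M‖ = 1) (h1 : M 1 = 1) (A : Set G) : 0 ≤ mu M A := by
  set f : lp (fun _ : G => ℂ) ⊤ := (2:ℂ) • ind A - 1 with hf
  have hnorm : ‖f‖ ≤ 1 := by
    apply lp.norm_le_of_forall_le zero_le_one
    intro y
    have hfy : f y = (2:ℂ) * (ind A : ∀ _ : G, ℂ) y - 1 := by
      rw [hf, lp.coeFn_sub, Pi.sub_apply, lp.coeFn_smul, Pi.smul_apply,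
        lp.infty_coeFn_one, Pi.one_apply, smul_eq_mul]
    rw [hfy, ind_apply]
    by_cases h : y ∈ A
    · simp only [h, if_true, mul_one]
      norm_num
    · simp only [h, if_false, mul_zero, zero_sub, norm_neg, norm_one, le_refl]
  have hMf : ‖M f‖ ≤ 1 := by
    have h := M.le_opNorm f
    rw [hM, one_mul] at h
    exact h.trans hnorm
  have hMfval : M f = 2 * M (ind A) - 1 := by
    rw [hf, map_sub, map_smul, h1, smul_eq_mul]
  rw [hMfval] at hMf
  have hre : |(2 * M (ind A) - 1).re| ≤ 1 :=
    le_trans (Complex.abs_re_le_norm _) hMf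
  have hcalc : (2 * M (ind A) - 1).re = 2 * (M (ind A)).re - 1 := by
    simp [Complex.sub_re, Complex.mul_re]
  rw [hcalc, abs_le] at hre
  unfold mu
  linarith [hre.1]

lemma mu_invariant
    (hinv : ∀ (x : G) (φ ψ : lp (fun _ : G => ℂ) ⊤),
      (∀ y : G, ψ y = φ (x⁻¹ * y)) → M ψ = M φ)
    (x : G) (A : Set G) :
    mu M {y | x⁻¹ * y ∈ A} = mu M A := by
  unfold mu
  congr 1
  apply hinv x (ind A)
  intro y
  rw [ind_apply, ind_apply]
  simp [Set.mem_setOf_eq]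

end NonAmenableAux

namespace NonAmenableAux

open FreeGroup

abbrev F2 := FreeGroup (Fin 2)

/-- set of reduced words starting with a given letter -/
def S (x : Fin 2) (b : Bool) : Set F2 := {g | g.toWord.head? = some (x, b)}

lemma inv_of_mul_toWord (x : Fin 2) (g : F2) :
    ((FreeGroup.of x)⁻¹ * g).toWord = FreeGroup.reduce ((x, false) :: g.toWord) := by
  conv_lhs => rw [← FreeGroup.mk_toWord (x := g)]
  have h1 : (FreeGroup.of x)⁻¹ = FreeGroup.mk [(x, false)] := by
    show (FreeGroup.mk [(x, true)])⁻¹ = _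
    rw [FreeGroup.inv_mk]
    simp [FreeGroup.invRev]
  rw [h1, FreeGroup.mul_mk, FreeGroup.toWord_mk]
  rfl

lemma key (x : Fin 2) (g : F2) :
    (FreeGroup.of x)⁻¹ * g ∈ S x false ↔ g ∉ S x true := by
  have hr : FreeGroup.reduce g.toWord = g.toWord := FreeGroup.reduce_toWord g
  simp only [S, Set.mem_setOf_eq, inv_of_mul_toWord, FreeGroup.reduce.cons, hr]
  rcases hw : g.toWord with _ | ⟨⟨y, b⟩, t⟩
  · simp
  · rw [hw] at hr
    by_cases hc : x = y ∧ b = true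
    · obtain ⟨rfl, rfl⟩ := hc
      show (if x = x ∧ false = !true then t else (x, false) :: (x, true) :: t).head? =
          some (x, false) ↔ ¬((x, true) :: t).head? = some (x, true)
      rw [if_pos (by simp)]
      simp only [List.head?_cons, Option.some.injEq, Prod.mk.injEq, and_true, not_true_eq_false,
        iff_false]
      intro ht
      rcases ht' : t with _ | ⟨⟨z, c⟩, t'⟩
      · rw [ht'] at ht; simp at ht
      · rw [ht'] at ht
        simp only [List.head?_cons, Option.some.injEq, Prod.mk.injEq] at ht
        obtain ⟨rfl, rfl⟩ := ht
        rw [ht'] at hr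
        exact FreeGroup.reduce.not (L₂ := []) (b := true) (L₃ := t') hr
    · have hne : ¬(x = y ∧ false = !b) := by
        rintro ⟨rfl, h2⟩
        apply hc
        refine ⟨rfl, ?_⟩
        cases b
        · simp at h2
        · rfl
      show (if x = y ∧ false = !b then t else (x, false) :: (y, b) :: t).head? =
          some (x, false) ↔ ¬((y, b) :: t).head? = some (x, true)
      rw [if_neg hne]
      refine ⟨fun _ h2 => ?_, fun _ => rfl⟩
      simp only [List.head?_cons, Option.some.injEq, Prod.mk.injEq] at h2
      exact hc ⟨h2.1.symm, h2.2⟩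

lemma disjoint_S {x y : Fin 2} {b c : Bool} (h : (x, b) ≠ (y, c)) :
    Disjoint (S x b) (S y c) := by
  rw [Set.disjoint_left]
  intro g hg hg'
  simp only [S, Set.mem_setOf_eq] at hg hg'
  rw [hg] at hg'
  exact h (Option.some_injective _ hg')

lemma disjoint_one_S (x : Fin 2) (b : Bool) :
    Disjoint ({(1 : F2)} : Set F2) (S x b) := by
  rw [Set.disjoint_left]
  rintro g rfl hg
  simp [S, FreeGroup.toWord_one] at hg

lemma univ_eq_partition :
    (Set.univ : Set F2) = ({1} : Set F2) ∪ (S 0 true ∪ S 0 false) ∪ (S 1 true ∪ S 1 false) := by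
  ext g
  simp only [Set.mem_univ, true_iff, Set.mem_union, Set.mem_singleton_iff, S,
    Set.mem_setOf_eq]
  rcases hw : g.toWord with _ | ⟨⟨y, b⟩, t⟩
  · left; left
    rw [← FreeGroup.toWord_eq_nil_iff, hw]
  · fin_cases y <;> cases b <;> simp

end NonAmenableAux

end NonAmenableSection

/-- The free group on two generators is not amenable: there is no left invariant mean
on `ℓ^∞(F₂)`. -/
theorem freeGroup_two_not_amenable :
    ¬ ∃ M : lp (fun _ : FreeGroup (Fin 2) => ℂ) ⊤ →L[ℂ] ℂ,
      IsDiscreteLeftInvariantMean (FreeGroup (Fin 2)) M := by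
  open NonAmenableAux in
  rintro ⟨M, hM, h1, hinv⟩
  have hnn := mu_nonneg M hM h1
  have hU := mu_univ M h1
  have hhalf : ∀ x : Fin 2, mu M (S x true) + mu M (S x false) = 1 := by
    intro x
    have hT : {y : F2 | (FreeGroup.of x)⁻¹ * y ∈ S x false} = (S x true)ᶜ := by
      ext g
      simpa using key x g
    have h2 := mu_invariant M hinv (FreeGroup.of x) (S x false)
    have h3 : mu M (S x true ∪ (S x true)ᶜ) = mu M (S x true) + mu M ((S x true)ᶜ) :=
      mu_union M disjoint_compl_right
    rw [Set.union_compl_self, hU] at h3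
    rw [hT] at h2
    linarith
  have hd1 : Disjoint (S (0:Fin 2) true) (S 0 false) := disjoint_S (by decide)
  have hd2 : Disjoint (S (1:Fin 2) true) (S 1 false) := disjoint_S (by decide)
  have hd3 : Disjoint ({(1:F2)} : Set F2) (S 0 true ∪ S 0 false) :=
    Set.disjoint_union_right.mpr ⟨disjoint_one_S 0 true, disjoint_one_S 0 false⟩
  have hd4 : Disjoint (({(1:F2)} : Set F2) ∪ (S 0 true ∪ S 0 false)) (S 1 true ∪ S 1 false) := by
    refine Set.disjoint_union_left.mpr ⟨?_, ?_⟩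
    · exact Set.disjoint_union_right.mpr ⟨disjoint_one_S 1 true, disjoint_one_S 1 false⟩
    · refine Set.disjoint_union_left.mpr ⟨?_, ?_⟩ <;>
        exact Set.disjoint_union_right.mpr ⟨disjoint_S (by decide), disjoint_S (by decide)⟩
  have hp : (1:ℝ) = mu M {1} + (mu M (S 0 true) + mu M (S 0 false))
      + (mu M (S 1 true) + mu M (S 1 false)) := by
    rw [← hU, univ_eq_partition, mu_union M hd4, mu_union M hd3, mu_union M hd1, mu_union M hd2]
  linarith [hnn {1}, hhalf 0, hhalf 1]
end
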